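/- Let F and G be cyclically symmetric homogeneous polynomials on ℝ^N × ℝ^N of degrees r' and r'' respectively, with seeds f of class D(C_f, σ') and g of class D(C_g, σ''), and let 0 < σ < min(σ', σ''). Then the Poisson bracket H = {F, G} admits a seed h of class D(C_h, σ) with C_h = r' r'' C_f C_g / ((1 − e^{−max(σ',σ'')}) (1 − e^{−max(σ',σ'') + σ})). -/

import Mathlib

open MvPolynomial Finset Real

open scoped Fin.IntCast

/-- index set for the `2N` variables: `inl j` ↦ `x_j`, `inr j` ↦ `y_j` (indices mod `N`). -/
abbrev Idx (N : ℕ) := Fin N ⊕ Fin N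

/-- the cyclic shift `τ^s` (`s ∈ ℤ`) acting on polynomials: `τ^s X_j = X_{j+s}`
(indices mod `N`), separately on the `x` and `y` variables, so that
`(τ^s f)(x,y) = f(τ^s x, τ^s y)`. -/
noncomputable def tauPow (N : ℕ) [NeZero N] (s : ℤ) (f : MvPolynomial (Idx N) ℝ) :
    MvPolynomial (Idx N) ℝ :=
  rename (Sum.map (· + (s : Fin N)) (· + (s : Fin N))) f

/-- `f ↦ f^⊕ := ∑_{l=1}^N τ^l f`. -/
noncomputable def oplus (N : ℕ) [NeZero N] (f : MvPolynomial (Idx N) ℝ) :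
    MvPolynomial (Idx N) ℝ :=
  ∑ l ∈ Finset.range N, tauPow N ((l : ℤ) + 1) f

/-- the polynomial norm `‖f‖_R`; for a homogeneous polynomial of degree `s` it equals
`R^s ∑_{|j|+|k|=s} |f_{j,k}|`. -/
noncomputable def pnorm {N : ℕ} (R : ℝ) (f : MvPolynomial (Idx N) ℝ) : ℝ :=
  ∑ d ∈ f.support, |f.coeff d| * R ^ (d.sum fun _ e => e)

/-- the Poisson bracket `{f,g} = ∑_j (∂f/∂x_j ∂g/∂y_j − ∂f/∂y_j ∂g/∂x_j)`. -/
noncomputable def poisson (N : ℕ) (f g : MvPolynomial (Idx N) ℝ) : MvPolynomial (Idx N) ℝ :=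
  ∑ j : Fin N,
    (pderiv (Sum.inl j) f * pderiv (Sum.inr j) g - pderiv (Sum.inr j) f * pderiv (Sum.inl j) g)

/-- `p` involves only the sites `0,…,m` (it is left aligned with interaction distance `≤ m`). -/
def SuppIn (N : ℕ) (m : ℕ) (p : MvPolynomial (Idx N) ℝ) : Prop :=
  ∀ d ∈ p.support, ∀ j : Fin N, (d (Sum.inl j) ≠ 0 ∨ d (Sum.inr j) ≠ 0) → (j : ℕ) ≤ m

/-- the seed `f` is of class `D(C,σ)`: it decomposes as `f = ∑_{m≥0} f^(m)` with each `f^(m)`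
left aligned, containing only monomials of interaction distance `≤ m`, and
`‖f^(m)‖₁ ≤ C e^{−σ m}`. -/
def ClassD (N : ℕ) (Cf σ : ℝ) (f : MvPolynomial (Idx N) ℝ) : Prop :=
  ∃ (M : ℕ) (comp : ℕ → MvPolynomial (Idx N) ℝ),
    f = ∑ m ∈ Finset.range M, comp m ∧
    (∀ m, M ≤ m → comp m = 0) ∧
    (∀ m, SuppIn N m (comp m)) ∧
    (∀ m, pnorm 1 (comp m) ≤ Cf * Real.exp (-σ * m))

set_option linter.unusedSectionVars false
set_option linter.unusedVariables false
set_option maxHeartbeats 1000000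

namespace Aux

variable {N : ℕ} [NeZero N]

local notation "P" => MvPolynomial (Idx N) ℝ

/-! ### the shift operator -/

def sh (v : Fin N) : Idx N → Idx N := Sum.map (· + v) (· + v)

lemma sh_inj (v : Fin N) : Function.Injective (sh v) := by
  intro i j hij
  cases i <;> cases j <;> simp [sh] at hij ⊢ <;> exact hij

noncomputable def Sv (v : Fin N) (p : P) : P := rename (sh v) p

lemma tauPow_eq_Sv (s : ℤ) (p : P) : tauPow N s p = Sv (s : Fin N) p := rfl

lemma sh_comp (a b : Fin N) : sh a ∘ sh b = sh (N := N) (a + b) := by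
  funext i; cases i <;> simp [sh, add_assoc, add_comm b a]

lemma Sv_Sv (a b : Fin N) (p : P) : Sv a (Sv b p) = Sv (a + b) p := by
  unfold Sv
  rw [rename_rename, sh_comp]

lemma Sv_sum {ι : Type*} (v : Fin N) (s : Finset ι) (p : ι → P) :
    Sv v (∑ i ∈ s, p i) = ∑ i ∈ s, Sv v (p i) := by
  unfold Sv; exact map_sum _ _ _

lemma Sv_zero_poly (v : Fin N) : Sv v (0 : P) = 0 := by unfold Sv; exact map_zero _

lemma Sv_mul (v : Fin N) (p q : P) : Sv v (p * q) = Sv v p * Sv v q := by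
  unfold Sv; exact map_mul _ _ _

lemma Sv_sub (v : Fin N) (p q : P) : Sv v (p - q) = Sv v p - Sv v q := by
  unfold Sv; exact map_sub _ _ _

lemma oplus_eq (p : P) : oplus N p = ∑ v : Fin N, Sv v p := by
  rw [oplus]
  rw [← Fin.sum_univ_eq_sum_range (fun l => tauPow N ((l : ℤ) + 1) p) N]
  simp only [tauPow_eq_Sv]
  refine Fintype.sum_equiv (Equiv.addRight (1 : Fin N)) _ _ (fun v => ?_)
  congr 1
  simp [Equiv.addRight]
  rw [Fin.intCast_def', if_pos (by omega)]
  ext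
  simp [Fin.val_add, Fin.val_natCast, Int.natAbs_add_of_nonneg]

lemma oplus_Sv (k : Fin N) (p : P) : oplus N (Sv k p) = oplus N p := by
  rw [oplus_eq, oplus_eq]
  simp only [Sv_Sv]
  exact Fintype.sum_equiv (Equiv.addRight k) _ _ (fun v => rfl)

lemma oplus_sum {ι : Type*} (s : Finset ι) (p : ι → P) :
    oplus N (∑ i ∈ s, p i) = ∑ i ∈ s, oplus N (p i) := by
  simp only [oplus_eq, Sv_sum]
  exact Finset.sum_comm

lemma oplus_zero : oplus N (0 : P) = 0 := by
  simp [oplus_eq, Sv_zero_poly]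

/-! ### equivariance of the Poisson bracket -/

lemma pderiv_Sv_inl (v j : Fin N) (p : P) :
    pderiv (Sum.inl j) (Sv v p) = Sv v (pderiv (Sum.inl (j - v)) p) := by
  have h := pderiv_rename (sh_inj v) (Sum.inl (j - v)) p
  have e : sh v (Sum.inl (j - v)) = Sum.inl j := by simp [sh]
  rw [e] at h
  exact h

lemma pderiv_Sv_inr (v j : Fin N) (p : P) :
    pderiv (Sum.inr j) (Sv v p) = Sv v (pderiv (Sum.inr (j - v)) p) := by
  have h := pderiv_rename (sh_inj v) (Sum.inr (j - v)) p
  have e : sh v (Sum.inr (j - v)) = Sum.inr j := by simp [sh]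
  rw [e] at h
  exact h

lemma poisson_Sv (v : Fin N) (a b : P) :
    poisson N (Sv v a) (Sv v b) = Sv v (poisson N a b) := by
  unfold poisson
  rw [show Sv v (∑ j : Fin N, (pderiv (Sum.inl j) a * pderiv (Sum.inr j) b -
      pderiv (Sum.inr j) a * pderiv (Sum.inl j) b)) = ∑ j : Fin N, Sv v
      (pderiv (Sum.inl j) a * pderiv (Sum.inr j) b -
       pderiv (Sum.inr j) a * pderiv (Sum.inl j) b) from map_sum _ _ _]
  simp only [pderiv_Sv_inl, pderiv_Sv_inr, ← Sv_mul, ← Sv_sub]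
  exact Fintype.sum_equiv (Equiv.subRight v) _ _ (fun j => rfl)

lemma poisson_sum_left {ι : Type*} (s : Finset ι) (a : ι → P) (b : P) :
    poisson N (∑ i ∈ s, a i) b = ∑ i ∈ s, poisson N (a i) b := by
  unfold poisson
  rw [Finset.sum_comm]
  refine Finset.sum_congr rfl (fun j _ => ?_)
  simp only [map_sum, Finset.sum_mul, Finset.sum_sub_distrib]

lemma poisson_sum_right {ι : Type*} (s : Finset ι) (a : P) (b : ι → P) :
    poisson N a (∑ i ∈ s, b i) = ∑ i ∈ s, poisson N a (b i) := by
  unfold poisson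
  rw [Finset.sum_comm]
  refine Finset.sum_congr rfl (fun j _ => ?_)
  simp only [map_sum, Finset.mul_sum, Finset.sum_sub_distrib]

lemma poisson_zero_left (b : P) : poisson N 0 b = 0 := by simp [poisson]

lemma poisson_zero_right (a : P) : poisson N a 0 = 0 := by simp [poisson]

lemma poisson_oplus_oplus (a b : P) :
    poisson N (oplus N a) (oplus N b) = ∑ v : Fin N, oplus N (poisson N a (Sv v b)) := by
  rw [oplus_eq a, oplus_eq b, poisson_sum_left]
  calc ∑ t : Fin N, poisson N (Sv t a) (∑ u : Fin N, Sv u b)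
      = ∑ t : Fin N, ∑ u : Fin N, poisson N (Sv t a) (Sv u b) :=
        Finset.sum_congr rfl fun t _ => poisson_sum_right _ _ _
    _ = ∑ t : Fin N, ∑ v : Fin N, Sv t (poisson N a (Sv v b)) := by
        refine Finset.sum_congr rfl fun t _ => ?_
        refine (Fintype.sum_equiv (Equiv.addLeft t)
          (fun v => Sv t (poisson N a (Sv v b)))
          (fun u => poisson N (Sv t a) (Sv u b)) (fun v => ?_)).symm
        dsimp only [Equiv.coe_addLeft]
        rw [← Sv_Sv t v b, poisson_Sv]
    _ = ∑ v : Fin N, ∑ t : Fin N, Sv t (poisson N a (Sv v b)) := Finset.sum_comm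
    _ = ∑ v : Fin N, oplus N (poisson N a (Sv v b)) :=
        Finset.sum_congr rfl fun v _ => (oplus_eq _).symm

/-! ### the norm -/

lemma pnorm_one_eq (p : P) : pnorm 1 p = ∑ d ∈ p.support, |p.coeff d| := by
  simp [pnorm]

lemma pnorm_one_nonneg (p : P) : 0 ≤ pnorm 1 p := by
  rw [pnorm_one_eq]; exact Finset.sum_nonneg fun d _ => abs_nonneg _

lemma pnorm_one_eq_of_subset {p : P} {A : Finset ((Idx N) →₀ ℕ)} (h : p.support ⊆ A) :
    pnorm 1 p = ∑ d ∈ A, |p.coeff d| := by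
  rw [pnorm_one_eq]
  refine Finset.sum_subset h (fun d _ hd => ?_)
  rw [notMem_support_iff.mp hd, abs_zero]

lemma pnorm_one_add_le (p q : P) : pnorm 1 (p + q) ≤ pnorm 1 p + pnorm 1 q := by
  rw [pnorm_one_eq_of_subset (MvPolynomial.support_add (p := p) (q := q)),
    pnorm_one_eq_of_subset (Finset.subset_union_left (s₁ := p.support) (s₂ := q.support)),
    pnorm_one_eq_of_subset (Finset.subset_union_right (s₁ := p.support) (s₂ := q.support)),
    ← Finset.sum_add_distrib]
  refine Finset.sum_le_sum fun d _ => ?_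
  rw [coeff_add]
  exact abs_add_le _ _

lemma pnorm_one_sum_le {ι : Type*} (s : Finset ι) (p : ι → P) :
    pnorm 1 (∑ i ∈ s, p i) ≤ ∑ i ∈ s, pnorm 1 (p i) := by
  classical
  induction s using Finset.cons_induction with
  | empty => simp [pnorm]
  | cons i s hi ih =>
      rw [Finset.sum_cons, Finset.sum_cons]
      exact le_trans (pnorm_one_add_le _ _) (by linarith)

lemma pnorm_one_neg (p : P) : pnorm 1 (-p) = pnorm 1 p := by
  simp [pnorm_one_eq, MvPolynomial.support_neg]

lemma pnorm_one_sub_le (p q : P) : pnorm 1 (p - q) ≤ pnorm 1 p + pnorm 1 q := by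
  rw [sub_eq_add_neg]
  exact le_trans (pnorm_one_add_le _ _) (by rw [pnorm_one_neg])

lemma pnorm_one_monomial_le (d : (Idx N) →₀ ℕ) (c : ℝ) : pnorm 1 (monomial d c) ≤ |c| := by
  rcases eq_or_ne c 0 with rfl | hc
  · simp [pnorm_one_eq]
  · rw [pnorm_one_eq, support_monomial, if_neg hc]
    simp

lemma pnorm_one_mul_le (p q : P) : pnorm 1 (p * q) ≤ pnorm 1 p * pnorm 1 q := by
  classical
  conv_lhs => rw [p.as_sum, q.as_sum, Finset.sum_mul_sum]
  refine le_trans (pnorm_one_sum_le _ _) ?_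
  rw [pnorm_one_eq, pnorm_one_eq, Finset.sum_mul_sum]
  refine Finset.sum_le_sum fun d _ => ?_
  refine le_trans (pnorm_one_sum_le _ _) ?_
  refine Finset.sum_le_sum fun e _ => ?_
  rw [monomial_mul]
  exact le_trans (pnorm_one_monomial_le _ _) (le_of_eq (abs_mul _ _))

lemma pnorm_one_Sv (v : Fin N) (p : P) : pnorm 1 (Sv v p) = pnorm 1 p := by
  rw [pnorm_one_eq, pnorm_one_eq]
  unfold Sv
  rw [support_rename_of_injective (sh_inj v),
    Finset.sum_image (fun a _ b _ h => Finsupp.mapDomain_injective (sh_inj v) h)]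
  refine Finset.sum_congr rfl fun d _ => ?_
  rw [coeff_rename_mapDomain _ (sh_inj v)]

/-! ### derivatives and homogeneity -/

lemma pderiv_eq_sum (i : Idx N) (p : P) :
    pderiv i p = ∑ d ∈ p.support, monomial (d - Finsupp.single i 1) (p.coeff d * (d i : ℝ)) := by
  conv_lhs => rw [p.as_sum]
  rw [map_sum]
  exact Finset.sum_congr rfl fun d _ => pderiv_monomial

lemma sum_pnorm_pderiv_le (p : P) (r : ℕ) (hp : p.IsHomogeneous r) :
    ∑ i : Idx N, pnorm 1 (pderiv i p) ≤ (r : ℝ) * pnorm 1 p := by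
  have step : ∀ i : Idx N, pnorm 1 (pderiv i p) ≤ ∑ d ∈ p.support, |p.coeff d| * (d i : ℝ) := by
    intro i
    rw [pderiv_eq_sum]
    refine le_trans (pnorm_one_sum_le _ _) (Finset.sum_le_sum fun d _ => ?_)
    refine le_trans (pnorm_one_monomial_le _ _) ?_
    rw [abs_mul, Nat.abs_cast]
  refine le_trans (Finset.sum_le_sum fun i _ => step i) ?_
  rw [Finset.sum_comm]
  rw [pnorm_one_eq, Finset.mul_sum]
  refine Finset.sum_le_sum fun d hd => ?_
  rw [← Finset.mul_sum]
  rw [mul_comm ((r : ℝ)) _]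
  refine mul_le_mul_of_nonneg_left ?_ (abs_nonneg _)
  have hdeg : d.degree = r := by
    by_contra hne
    exact (mem_support_iff.mp hd) (hp.coeff_eq_zero hne)
  have : ∑ i : Idx N, (d i : ℝ) = (d.degree : ℝ) := by
    rw [Finsupp.degree_apply]
    push_cast
    rw [Finset.sum_subset (Finset.subset_univ d.support)]
    intro x _ hx
    simp [Finsupp.notMem_support_iff.mp hx]
  rw [this, hdeg]

lemma homogeneousComponent_of_isHomogeneous {p : P} {r : ℕ} (hp : p.IsHomogeneous r) :
    homogeneousComponent r p = p := by
  ext d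
  rw [coeff_homogeneousComponent]
  split_ifs with hd
  · rfl
  · exact (hp.coeff_eq_zero hd).symm

lemma support_homogeneousComponent_subset' (r : ℕ) (p : P) :
    (homogeneousComponent r p).support ⊆ p.support := by
  intro d hd
  rw [mem_support_iff, coeff_homogeneousComponent] at hd
  rw [mem_support_iff]
  intro hc
  rw [hc] at hd
  simp at hd

lemma pnorm_one_homogeneousComponent_le (r : ℕ) (p : P) :
    pnorm 1 (homogeneousComponent r p) ≤ pnorm 1 p := by
  rw [pnorm_one_eq, pnorm_one_eq]
  refine le_trans (Finset.sum_le_sum (fun d _ => ?_))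
    (Finset.sum_le_sum_of_subset_of_nonneg (support_homogeneousComponent_subset' r p)
      (fun d _ _ => abs_nonneg _))
  rw [coeff_homogeneousComponent]
  split_ifs
  · exact le_refl _
  · simp [abs_nonneg]

/-! ### supports and alignment -/

def siteV : Idx N → ℕ := Sum.elim Fin.val Fin.val

lemma suppIn_iff_vars (m : ℕ) (p : P) :
    SuppIn N m p ↔ ∀ i ∈ p.vars, siteV i ≤ m := by
  constructor
  · intro h i hi
    rw [mem_vars] at hi
    obtain ⟨d, hd, hid⟩ := hi
    rw [Finsupp.mem_support_iff] at hid
    cases i with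
    | inl j => exact h d hd j (Or.inl hid)
    | inr j => exact h d hd j (Or.inr hid)
  · intro h d hd j hj
    cases hj with
    | inl hj =>
        exact h (Sum.inl j) (mem_vars _ |>.mpr ⟨d, hd, Finsupp.mem_support_iff.mpr hj⟩)
    | inr hj =>
        exact h (Sum.inr j) (mem_vars _ |>.mpr ⟨d, hd, Finsupp.mem_support_iff.mpr hj⟩)

lemma suppIn_sum {ι : Type*} (m : ℕ) (s : Finset ι) (p : ι → P)
    (h : ∀ i ∈ s, SuppIn N m (p i)) : SuppIn N m (∑ i ∈ s, p i) := by
  rw [suppIn_iff_vars]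
  intro i hi
  have := vars_sum_subset s p hi
  rw [Finset.mem_biUnion] at this
  obtain ⟨x, hx, hix⟩ := this
  exact (suppIn_iff_vars m (p x)).mp (h x hx) i hix

lemma vars_monomial_subset (d : (Idx N) →₀ ℕ) (c : ℝ) : (monomial d c).vars ⊆ d.support := by
  rcases eq_or_ne c 0 with rfl | hc
  · simp
  · rw [vars_monomial hc]

lemma vars_pderiv_subset (i : Idx N) (p : P) : (pderiv i p).vars ⊆ p.vars := by
  rw [pderiv_eq_sum]
  refine subset_trans (vars_sum_subset _ _) ?_
  rw [Finset.biUnion_subset]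
  intro d hd
  refine subset_trans (vars_monomial_subset _ _) ?_
  intro x hx
  rw [Finsupp.mem_support_iff] at hx
  have hxd : x ∈ d.support := by
    rw [Finsupp.mem_support_iff]
    intro h0
    rw [Finsupp.tsub_apply, h0] at hx
    simp at hx
  exact (mem_vars x).mpr ⟨d, hd, hxd⟩

lemma pderiv_eq_zero_of_not_mem_vars' {i : Idx N} {p : P} (h : i ∉ p.vars) : pderiv i p = 0 := by
  rw [pderiv_eq_sum]
  refine Finset.sum_eq_zero fun d hd => ?_
  have : d i = 0 := by
    by_contra h0
    exact h ((mem_vars i).mpr ⟨d, hd, Finsupp.mem_support_iff.mpr h0⟩)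
  rw [this]
  simp

lemma vars_poisson_subset (a b : P) : (poisson N a b).vars ⊆ a.vars ∪ b.vars := by
  unfold poisson
  refine subset_trans (vars_sum_subset _ _) ?_
  rw [Finset.biUnion_subset]
  intro j _
  refine subset_trans (vars_sub_subset _) ?_
  refine Finset.union_subset ?_ ?_ <;>
  · refine subset_trans (vars_mul _ _) ?_
    refine Finset.union_subset ?_ ?_
    · exact subset_trans (vars_pderiv_subset _ _) Finset.subset_union_left
    · exact subset_trans (vars_pderiv_subset _ _) Finset.subset_union_right

lemma poisson_ne_zero_common (a b : P) (h : poisson N a b ≠ 0) :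
    ∃ j : Fin N, (Sum.inl j ∈ a.vars ∨ Sum.inr j ∈ a.vars) ∧
      (Sum.inl j ∈ b.vars ∨ Sum.inr j ∈ b.vars) := by
  by_contra hc
  push_neg at hc
  refine h (Finset.sum_eq_zero fun j _ => ?_)
  by_cases hja : Sum.inl j ∈ a.vars ∨ Sum.inr j ∈ a.vars
  · have hjb := hc j hja
    rw [pderiv_eq_zero_of_not_mem_vars' hjb.1, pderiv_eq_zero_of_not_mem_vars' hjb.2]
    ring
  · push_neg at hja
    rw [pderiv_eq_zero_of_not_mem_vars' hja.1, pderiv_eq_zero_of_not_mem_vars' hja.2]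
    ring

lemma mem_vars_Sv {v : Fin N} {p : P} {i : Idx N} (h : i ∈ (Sv v p).vars) :
    ∃ i₀ ∈ p.vars, i = sh v i₀ := by
  have := vars_rename (sh v) p h
  rw [Finset.mem_image] at this
  obtain ⟨i₀, hi₀, hii⟩ := this
  exact ⟨i₀, hi₀, hii.symm⟩

lemma fin_val_add_le (a b : Fin N) : ((a + b : Fin N) : ℕ) ≤ (a : ℕ) + (b : ℕ) := by
  rw [Fin.val_add]
  exact Nat.mod_le _ _

open scoped Fin.NatCast in
lemma fin_align (m' m'' : ℕ) (j v : Fin N) (hj : (j : ℕ) ≤ m')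
    (hw : ((j - v : Fin N) : ℕ) ≤ m'') :
    ∃ k : Fin N, ∀ u : Fin N,
      ((u : ℕ) ≤ m' ∨ ((u - v : Fin N) : ℕ) ≤ m'') → ((u + k : Fin N) : ℕ) ≤ m' + m'' := by
  set w : ℕ := ((j - v : Fin N) : ℕ) with hwdef
  have hvj : v = j - ((w : ℕ) : Fin N) := by
    rw [hwdef, Fin.cast_val_eq_self, sub_sub_cancel]
  by_cases hcase : w ≤ (j : ℕ)
  · refine ⟨0, fun u hu => ?_⟩
    rw [add_zero]
    rcases hu with h | h
    · omega
    · have hjw : j - ((w : ℕ) : Fin N) = (((j : ℕ) - w : ℕ) : Fin N) := by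
        have : ((((j : ℕ) - w : ℕ) : Fin N)) + ((w : ℕ) : Fin N) = j := by
          rw [← Nat.cast_add, Nat.sub_add_cancel hcase, Fin.cast_val_eq_self]
        rw [eq_comm, eq_sub_iff_add_eq, this]
      have hu2 : u = ((((u - v : Fin N) : ℕ) + ((j : ℕ) - w) : ℕ) : Fin N) := by
        rw [Nat.cast_add, Fin.cast_val_eq_self, ← hjw, ← hvj, sub_add_cancel]
      rw [hu2, Fin.val_natCast]
      have := Nat.mod_le (((u - v : Fin N) : ℕ) + ((j : ℕ) - w)) N
      omega
  · refine ⟨((w - (j : ℕ) : ℕ) : Fin N), fun u hu => ?_⟩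
    rcases hu with h | h
    · refine le_trans (fin_val_add_le _ _) ?_
      rw [Fin.val_natCast]
      have := Nat.mod_le (w - (j : ℕ)) N
      omega
    · have hk : ((w - (j : ℕ) : ℕ) : Fin N) = ((w : ℕ) : Fin N) - j := by
        have : ((w - (j : ℕ) : ℕ) : Fin N) + (((j : ℕ) : ℕ) : Fin N) = ((w : ℕ) : Fin N) := by
          rw [← Nat.cast_add]
          congr 1
          omega
        rw [eq_sub_iff_add_eq, ← this, Fin.cast_val_eq_self]
      have hu2 : u + ((w - (j : ℕ) : ℕ) : Fin N) = u - v := by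
        rw [hk, hvj]
        abel
      rw [hu2]
      omega

lemma exists_align (m' m'' : ℕ) (a b : P) (ha : SuppIn N m' a) (hb : SuppIn N m'' b)
    (v : Fin N) :
    ∃ k : Fin N, SuppIn N (m' + m'') (Sv k (poisson N a (Sv v b))) := by
  by_cases hq : poisson N a (Sv v b) = 0
  · refine ⟨0, ?_⟩
    rw [hq, Sv_zero_poly]
    intro d hd
    simp at hd
  · obtain ⟨j, hja, hjb⟩ := poisson_ne_zero_common a (Sv v b) hq
    have hjm : (j : ℕ) ≤ m' := by
      rcases hja with h | h
      · exact (suppIn_iff_vars m' a).mp ha _ h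
      · exact (suppIn_iff_vars m' a).mp ha _ h
    have hjvm : ((j - v : Fin N) : ℕ) ≤ m'' := by
      rcases hjb with h | h <;>
      · obtain ⟨i₀, hi₀, hii⟩ := mem_vars_Sv h
        cases i₀ with
        | inl u₀ =>
            simp only [sh, Sum.map, Sum.elim] at hii
            first
            | (injection hii with hii2
               have : u₀ = j - v := by rw [eq_sub_iff_add_eq, hii2]
               rw [← this]
               exact (suppIn_iff_vars m'' b).mp hb _ hi₀)
            | exact absurd hii (by simp)
        | inr u₀ =>
            simp only [sh, Sum.map, Sum.elim] at hii
            first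
            | (injection hii with hii2
               have : u₀ = j - v := by rw [eq_sub_iff_add_eq, hii2]
               rw [← this]
               exact (suppIn_iff_vars m'' b).mp hb _ hi₀)
            | exact absurd hii (by simp)
    obtain ⟨k, hk⟩ := fin_align m' m'' j v hjm hjvm
    refine ⟨k, ?_⟩
    rw [suppIn_iff_vars]
    intro i hi
    obtain ⟨i₀, hi₀, rfl⟩ := mem_vars_Sv hi
    have hi₀2 := vars_poisson_subset a (Sv v b) hi₀
    rw [Finset.mem_union] at hi₀2
    have husite : ∀ u : Fin N, (i₀ = Sum.inl u ∨ i₀ = Sum.inr u) →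
        (u : ℕ) ≤ m' ∨ ((u - v : Fin N) : ℕ) ≤ m'' := by
      intro u hiu
      rcases hi₀2 with hA | hB
      · left
        rcases hiu with rfl | rfl
        · exact (suppIn_iff_vars m' a).mp ha _ hA
        · exact (suppIn_iff_vars m' a).mp ha _ hA
      · right
        obtain ⟨i₁, hi₁, hii⟩ := mem_vars_Sv hB
        rcases hiu with rfl | rfl <;>
        · cases i₁ with
          | inl u₀ =>
              simp only [sh, Sum.map] at hii
              first
              | (injection hii with hii2
                 have : u₀ = u - v := by rw [eq_sub_iff_add_eq, hii2]
                 rw [← this]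
                 exact (suppIn_iff_vars m'' b).mp hb _ hi₁)
              | exact absurd hii (by simp)
          | inr u₀ =>
              simp only [sh, Sum.map] at hii
              first
              | (injection hii with hii2
                 have : u₀ = u - v := by rw [eq_sub_iff_add_eq, hii2]
                 rw [← this]
                 exact (suppIn_iff_vars m'' b).mp hb _ hi₁)
              | exact absurd hii (by simp)
    cases i₀ with
    | inl u =>
        show ((u + k : Fin N) : ℕ) ≤ m' + m''
        exact hk u (husite u (Or.inl rfl))
    | inr u =>
        show ((u + k : Fin N) : ℕ) ≤ m' + m''
        exact hk u (husite u (Or.inr rfl))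

/-! ### the shift-summed bracket estimate -/

lemma sum_Sv_poisson_pnorm_le (a b : P) (ra rb : ℕ)
    (hA : a.IsHomogeneous ra) (hB : b.IsHomogeneous rb) :
    ∑ v : Fin N, pnorm 1 (poisson N a (Sv v b)) ≤
      ((ra : ℝ) * rb) * (pnorm 1 a * pnorm 1 b) := by
  classical
  set Ax : Fin N → ℝ := fun j => pnorm 1 (pderiv (Sum.inl j) a) with hAx
  set Ay : Fin N → ℝ := fun j => pnorm 1 (pderiv (Sum.inr j) a) with hAy
  set Bx : Fin N → ℝ := fun j => pnorm 1 (pderiv (Sum.inl j) b) with hBx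
  set By : Fin N → ℝ := fun j => pnorm 1 (pderiv (Sum.inr j) b) with hBy
  have step1 : ∀ v : Fin N, pnorm 1 (poisson N a (Sv v b)) ≤
      ∑ j : Fin N, (Ax j * By (j - v) + Ay j * Bx (j - v)) := by
    intro v
    refine le_trans (pnorm_one_sum_le _ _) (Finset.sum_le_sum fun j _ => ?_)
    refine le_trans (pnorm_one_sub_le _ _) ?_
    rw [pderiv_Sv_inl, pderiv_Sv_inr]
    refine add_le_add ?_ ?_
    · refine le_trans (pnorm_one_mul_le _ _) ?_
      rw [pnorm_one_Sv]
    · refine le_trans (pnorm_one_mul_le _ _) ?_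
      rw [pnorm_one_Sv]
  refine le_trans (Finset.sum_le_sum fun v (_ : v ∈ Finset.univ) => step1 v) ?_
  rw [Finset.sum_comm]
  have step2 : ∀ j : Fin N,
      ∑ v : Fin N, (Ax j * By (j - v) + Ay j * Bx (j - v)) =
        Ax j * (∑ w : Fin N, By w) + Ay j * (∑ w : Fin N, Bx w) := by
    intro j
    rw [Finset.sum_add_distrib, ← Finset.mul_sum, ← Finset.mul_sum]
    congr 1
    · congr 1
      exact Fintype.sum_equiv (Equiv.subLeft j) _ _ (fun v => rfl)
    · congr 1
      exact Fintype.sum_equiv (Equiv.subLeft j) _ _ (fun v => rfl)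
  rw [Finset.sum_congr rfl (fun j _ => step2 j)]
  rw [Finset.sum_add_distrib, ← Finset.sum_mul, ← Finset.sum_mul]
  have hAsum : (∑ j : Fin N, Ax j) + (∑ j : Fin N, Ay j) ≤ (ra : ℝ) * pnorm 1 a := by
    have := sum_pnorm_pderiv_le a ra hA
    rw [Fintype.sum_sum_type] at this
    exact this
  have hBsum : (∑ j : Fin N, Bx j) + (∑ j : Fin N, By j) ≤ (rb : ℝ) * pnorm 1 b := by
    have := sum_pnorm_pderiv_le b rb hB
    rw [Fintype.sum_sum_type] at this
    exact this
  have nAx : 0 ≤ ∑ j : Fin N, Ax j := Finset.sum_nonneg fun j _ => pnorm_one_nonneg _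
  have nAy : 0 ≤ ∑ j : Fin N, Ay j := Finset.sum_nonneg fun j _ => pnorm_one_nonneg _
  have nBx : 0 ≤ ∑ j : Fin N, Bx j := Finset.sum_nonneg fun j _ => pnorm_one_nonneg _
  have nBy : 0 ≤ ∑ j : Fin N, By j := Finset.sum_nonneg fun j _ => pnorm_one_nonneg _
  have expand : (∑ j : Fin N, Ax j) * (∑ w : Fin N, By w) +
      (∑ j : Fin N, Ay j) * (∑ w : Fin N, Bx w) ≤
      ((∑ j : Fin N, Ax j) + (∑ j : Fin N, Ay j)) *
        ((∑ j : Fin N, Bx j) + (∑ j : Fin N, By j)) := by nlinarith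
  refine le_trans expand ?_
  have hra : (0:ℝ) ≤ (ra : ℝ) * pnorm 1 a :=
    mul_nonneg (Nat.cast_nonneg _) (pnorm_one_nonneg _)
  have := mul_le_mul hAsum hBsum (by linarith) hra
  calc (∑ j : Fin N, Ax j + ∑ j : Fin N, Ay j) * (∑ j : Fin N, Bx j + ∑ j : Fin N, By j)
      ≤ ((ra : ℝ) * pnorm 1 a) * ((rb : ℝ) * pnorm 1 b) := this
    _ = ((ra : ℝ) * rb) * (pnorm 1 a * pnorm 1 b) := by ring

/-! ### combinatorial reindexing -/

lemma double_sum_tri {M : Type*} [AddCommMonoid M] (A B : ℕ) (t : ℕ → ℕ → M)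
    (hz : ∀ a b, A ≤ a ∨ B ≤ b → t a b = 0) :
    ∑ m ∈ Finset.range (A + B), ∑ m' ∈ Finset.range (m + 1), t m' (m - m') =
      ∑ a ∈ Finset.range A, ∑ b ∈ Finset.range B, t a b := by
  classical
  set n := A + B with hn
  have hRHS : ∑ a ∈ Finset.range A, ∑ b ∈ Finset.range B, t a b
      = ∑ a ∈ Finset.range n, ∑ b ∈ Finset.range n, t a b := by
    rw [Finset.sum_subset (Finset.range_subset_range.mpr (by omega : A ≤ n))]
    · refine Finset.sum_congr rfl fun a _ => ?_
      rw [Finset.sum_subset (Finset.range_subset_range.mpr (by omega : B ≤ n))]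
      intro b _ hb
      rw [Finset.mem_range] at hb
      exact hz a b (Or.inr (by omega))
    · intro a _ ha
      rw [Finset.mem_range] at ha
      exact Finset.sum_eq_zero fun b _ => hz a b (Or.inl (by omega))
  have hprod : ∑ a ∈ Finset.range n, ∑ b ∈ Finset.range n, t a b
      = ∑ p ∈ Finset.range n ×ˢ Finset.range n, t p.1 p.2 := by
    rw [Finset.sum_product]
  have hfilt : ∑ p ∈ Finset.range n ×ˢ Finset.range n, t p.1 p.2
      = ∑ p ∈ (Finset.range n ×ˢ Finset.range n).filter (fun p => p.1 + p.2 < n), t p.1 p.2 := by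
    rw [Finset.sum_subset (Finset.filter_subset _ _)]
    intro p hp hpf
    rw [Finset.mem_filter] at hpf
    have : ¬ (p.1 + p.2 < n) := fun hc => hpf ⟨hp, hc⟩
    exact hz p.1 p.2 (by omega)
  have hsig : ∑ m ∈ Finset.range n, ∑ m' ∈ Finset.range (m + 1), t m' (m - m')
      = ∑ x ∈ (Finset.range n).sigma (fun m => Finset.range (m + 1)), t x.2 (x.1 - x.2) :=
    Finset.sum_sigma' _ _ _
  rw [hsig, hRHS, hprod, hfilt]
  refine Finset.sum_nbij' (fun x => (x.2, x.1 - x.2)) (fun p => (⟨p.1 + p.2, p.1⟩ : (_ : ℕ) × ℕ))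
    ?_ ?_ ?_ ?_ ?_
  · rintro ⟨m, m'⟩ hx
    simp only [Finset.mem_sigma, Finset.mem_range] at hx
    simp only [Finset.mem_filter, Finset.mem_product, Finset.mem_range]
    omega
  · rintro ⟨a, b⟩ hp
    simp only [Finset.mem_filter, Finset.mem_product, Finset.mem_range] at hp
    simp only [Finset.mem_sigma, Finset.mem_range]
    omega
  · rintro ⟨m, m'⟩ hx
    simp only [Finset.mem_sigma, Finset.mem_range] at hx
    dsimp only
    have hmm : m' + (m - m') = m := by omega
    simp [hmm]
  · rintro ⟨a, b⟩ hp
    simp only [Finset.mem_filter, Finset.mem_product, Finset.mem_range] at hp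
    dsimp only
    have : a + b - a = b := by omega
    simp [this]
  · rintro ⟨m, m'⟩ _
    rfl

/-! ### the analytic estimate -/

lemma geom_le_aux (x : ℝ) (h0 : 0 ≤ x) (h1 : x < 1) (n : ℕ) :
    ∑ i ∈ Finset.range n, x ^ i ≤ 1 / (1 - x) := by
  have hne : x ≠ 1 := ne_of_lt h1
  rw [geom_sum_eq hne]
  have h2 : (x ^ n - 1) / (x - 1) = (1 - x ^ n) / (1 - x) := by
    rw [div_eq_div_iff (by intro hc; apply hne; linarith) (by linarith)]
    ring
  rw [h2]
  have hx : 0 ≤ x ^ n := pow_nonneg h0 n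
  have hd : 0 < 1 - x := by linarith
  gcongr
  linarith

lemma final_bound (σ σ' σ'' : ℝ) (hσ : 0 < σ) (h1 : σ < σ') (h2 : σ < σ'')
    (K : ℝ) (hK : 0 ≤ K) (m : ℕ) :
    ∑ m' ∈ Finset.range (m + 1),
        K * (Real.exp (-σ' * m') * Real.exp (-σ'' * ((m - m' : ℕ) : ℝ))) ≤
      K / ((1 - Real.exp (-(max σ' σ''))) * (1 - Real.exp (-(max σ' σ'') + σ))) *
        Real.exp (-σ * m) := by
  set μ := max σ' σ'' with hμ
  have hσμ : σ < μ := lt_of_lt_of_le h1 (le_max_left _ _)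
  have hx0 : (0 : ℝ) ≤ Real.exp (-μ + σ) := (Real.exp_pos _).le
  have hx1 : Real.exp (-μ + σ) < 1 := Real.exp_lt_one_iff.mpr (by linarith)
  have hy1 : Real.exp (-μ) < 1 := Real.exp_lt_one_iff.mpr (by linarith)
  have hd1 : 0 < 1 - Real.exp (-μ) := by linarith
  have hd2 : 0 < 1 - Real.exp (-μ + σ) := by linarith
  have hd1le : 1 - Real.exp (-μ) ≤ 1 := by
    have := (Real.exp_pos (-μ)).le
    linarith
  have step1 : ∑ m' ∈ Finset.range (m + 1),
      (Real.exp (-σ' * m') * Real.exp (-σ'' * ((m - m' : ℕ) : ℝ))) ≤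
      Real.exp (-σ * m) * (1 / (1 - Real.exp (-μ + σ))) := by
    rcases le_total σ' σ'' with hcase | hcase
    · have hμeq : μ = σ'' := max_eq_right hcase
      have hterm : ∀ m' ∈ Finset.range (m + 1),
          Real.exp (-σ' * m') * Real.exp (-σ'' * ((m - m' : ℕ) : ℝ)) ≤
            Real.exp (-σ * m) * (Real.exp (-μ + σ)) ^ ((m - m' : ℕ)) := by
        intro m' hm'
        rw [Finset.mem_range] at hm'
        have hm'le : m' ≤ m := by omega
        have hc : ((m - m' : ℕ) : ℝ) = (m : ℝ) - m' := by
          rw [Nat.cast_sub hm'le]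
        rw [← Real.exp_add, ← Real.exp_nat_mul, ← Real.exp_add, hc, hμeq]
        apply Real.exp_le_exp.mpr
        have hσσ' : σ * (m' : ℝ) ≤ σ' * m' :=
          mul_le_mul_of_nonneg_right h1.le (Nat.cast_nonneg m')
        have hmm : (0 : ℝ) ≤ (m : ℝ) - m' := by
          rw [← hc]; exact Nat.cast_nonneg _
        nlinarith
      refine le_trans (Finset.sum_le_sum hterm) ?_
      rw [← Finset.mul_sum]
      refine mul_le_mul_of_nonneg_left ?_ (Real.exp_pos _).le
      rw [show ∑ m' ∈ Finset.range (m + 1), Real.exp (-μ + σ) ^ (m - m')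
          = ∑ m' ∈ Finset.range (m + 1), Real.exp (-μ + σ) ^ m' from by
        rw [← Finset.sum_range_reflect (fun j => Real.exp (-μ + σ) ^ j) (m + 1)]
        exact Finset.sum_congr rfl fun j _ => by
          have hj : m - j = m + 1 - 1 - j := by omega
          rw [hj]]
      exact geom_le_aux _ hx0 hx1 _
    · have hμeq : μ = σ' := max_eq_left hcase
      have hterm : ∀ m' ∈ Finset.range (m + 1),
          Real.exp (-σ' * m') * Real.exp (-σ'' * ((m - m' : ℕ) : ℝ)) ≤
            Real.exp (-σ * m) * (Real.exp (-μ + σ)) ^ m' := by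
        intro m' hm'
        rw [Finset.mem_range] at hm'
        have hm'le : m' ≤ m := by omega
        have hc : ((m - m' : ℕ) : ℝ) = (m : ℝ) - m' := by
          rw [Nat.cast_sub hm'le]
        rw [← Real.exp_add, ← Real.exp_nat_mul, ← Real.exp_add, hc, hμeq]
        apply Real.exp_le_exp.mpr
        have hmm : (0 : ℝ) ≤ (m : ℝ) - m' := by
          rw [← hc]; exact Nat.cast_nonneg _
        have hσσ'' : σ * ((m : ℝ) - m') ≤ σ'' * ((m : ℝ) - m') :=
          mul_le_mul_of_nonneg_right h2.le hmm
        nlinarith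
      refine le_trans (Finset.sum_le_sum hterm) ?_
      rw [← Finset.mul_sum]
      refine mul_le_mul_of_nonneg_left ?_ (Real.exp_pos _).le
      exact geom_le_aux _ hx0 hx1 _
  calc ∑ m' ∈ Finset.range (m + 1),
      K * (Real.exp (-σ' * m') * Real.exp (-σ'' * ((m - m' : ℕ) : ℝ)))
      = K * ∑ m' ∈ Finset.range (m + 1),
        (Real.exp (-σ' * m') * Real.exp (-σ'' * ((m - m' : ℕ) : ℝ))) := by
        rw [Finset.mul_sum]
    _ ≤ K * (Real.exp (-σ * m) * (1 / (1 - Real.exp (-μ + σ)))) :=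
        mul_le_mul_of_nonneg_left step1 hK
    _ ≤ K / ((1 - Real.exp (-μ)) * (1 - Real.exp (-μ + σ))) * Real.exp (-σ * m) := by
        have e1 : K * (Real.exp (-σ * m) * (1 / (1 - Real.exp (-μ + σ))))
            = K * Real.exp (-σ * m) / (1 - Real.exp (-μ + σ)) := by ring
        have e2 : K / ((1 - Real.exp (-μ)) * (1 - Real.exp (-μ + σ))) * Real.exp (-σ * m)
            = K * Real.exp (-σ * m) / ((1 - Real.exp (-μ)) * (1 - Real.exp (-μ + σ))) := by
          ring
        rw [e1, e2, div_le_div_iff₀ hd2 (by positivity)]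
        have hKE : 0 ≤ K * Real.exp (-σ * m) := mul_nonneg hK (Real.exp_pos _).le
        have hdd : (1 - Real.exp (-μ)) * (1 - Real.exp (-μ + σ)) ≤ 1 - Real.exp (-μ + σ) := by
          nlinarith
        nlinarith

end Aux

open Aux in
/-- Let `F = f^⊕`, `G = g^⊕` be cyclically symmetric homogeneous
polynomials of degrees `r', r''` with seeds `f ∈ D(C_f,σ')`, `g ∈ D(C_g,σ'')`, and let
`0 < σ < min(σ',σ'')`.  Then `{F,G}` admits a seed `h` of class `D(C_h, σ)` with
`C_h = r' r'' C_f C_g / ((1−e^{−max(σ',σ'')})(1−e^{−max(σ',σ'')+σ}))`. -/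
theorem poisson_classD (N : ℕ) [NeZero N]
    (r' r'' : ℕ) (f g : MvPolynomial (Idx N) ℝ)
    (hf : f.IsHomogeneous r') (hg : g.IsHomogeneous r'')
    (Cf Cg σ' σ'' σ : ℝ) (hCf : 0 < Cf) (hCg : 0 < Cg)
    (hσ' : 0 < σ') (hσ'' : 0 < σ'')
    (hfD : ClassD N Cf σ' f) (hgD : ClassD N Cg σ'' g)
    (hσ : 0 < σ) (hσlt : σ < min σ' σ'') :
    ∃ h : MvPolynomial (Idx N) ℝ,
      oplus N h = poisson N (oplus N f) (oplus N g) ∧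
      ClassD N
        (r' * r'' * Cf * Cg /
          ((1 - Real.exp (-max σ' σ'')) * (1 - Real.exp (-max σ' σ'' + σ)))) σ h := by
  classical
  obtain ⟨hσσ' , hσσ''⟩ : σ < σ' ∧ σ < σ'' := lt_min_iff.mp hσlt
  obtain ⟨Mf, fc, hfsum, hf0, hfsupp, hfnorm⟩ := hfD
  obtain ⟨Mg, gc, hgsum, hg0, hgsupp, hgnorm⟩ := hgD
  set F : ℕ → MvPolynomial (Idx N) ℝ := fun m => homogeneousComponent r' (fc m) with hF
  set G : ℕ → MvPolynomial (Idx N) ℝ := fun m => homogeneousComponent r'' (gc m) with hG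
  have hFsum : f = ∑ m ∈ Finset.range Mf, F m := by
    conv_lhs => rw [← Aux.homogeneousComponent_of_isHomogeneous hf, hfsum]
    rw [map_sum]
  have hGsum : g = ∑ m ∈ Finset.range Mg, G m := by
    conv_lhs => rw [← Aux.homogeneousComponent_of_isHomogeneous hg, hgsum]
    rw [map_sum]
  have hF0 : ∀ m, Mf ≤ m → F m = 0 := by
    intro m hm; rw [hF]; dsimp only; rw [hf0 m hm]; exact map_zero _
  have hG0 : ∀ m, Mg ≤ m → G m = 0 := by
    intro m hm; rw [hG]; dsimp only; rw [hg0 m hm]; exact map_zero _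
  have hFsupp : ∀ m, SuppIn N m (F m) := by
    intro m d hd j hj
    exact hfsupp m d (Aux.support_homogeneousComponent_subset' r' (fc m) hd) j hj
  have hGsupp : ∀ m, SuppIn N m (G m) := by
    intro m d hd j hj
    exact hgsupp m d (Aux.support_homogeneousComponent_subset' r'' (gc m) hd) j hj
  have hFnorm : ∀ m, pnorm 1 (F m) ≤ Cf * Real.exp (-σ' * m) :=
    fun m => le_trans (Aux.pnorm_one_homogeneousComponent_le _ _) (hfnorm m)
  have hGnorm : ∀ m, pnorm 1 (G m) ≤ Cg * Real.exp (-σ'' * m) :=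
    fun m => le_trans (Aux.pnorm_one_homogeneousComponent_le _ _) (hgnorm m)
  have hFhom : ∀ m, (F m).IsHomogeneous r' := fun m => homogeneousComponent_isHomogeneous _ _
  have hGhom : ∀ m, (G m).IsHomogeneous r'' := fun m => homogeneousComponent_isHomogeneous _ _
  -- choose alignment shifts
  have halign : ∀ (m' m'' : ℕ) (v : Fin N), ∃ k : Fin N,
      SuppIn N (m' + m'') (Aux.Sv k (poisson N (F m') (Aux.Sv v (G m'')))) :=
    fun m' m'' v => Aux.exists_align m' m'' _ _ (hFsupp m') (hGsupp m'') v
  choose K hK using halign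
  set term : ℕ → ℕ → Fin N → MvPolynomial (Idx N) ℝ := fun m' m'' v =>
    Aux.Sv (K m' m'' v) (poisson N (F m') (Aux.Sv v (G m''))) with hterm
  set comp : ℕ → MvPolynomial (Idx N) ℝ := fun m =>
    ∑ m' ∈ Finset.range (m + 1), ∑ v : Fin N, term m' (m - m') v with hcomp
  refine ⟨∑ m ∈ Finset.range (Mf + Mg), comp m, ?_, Mf + Mg, comp, rfl, ?_, ?_, ?_⟩
  · -- oplus identity
    have hvanish : ∀ a b : ℕ, Mf ≤ a ∨ Mg ≤ b →
        (∑ v : Fin N, oplus N (poisson N (F a) (Aux.Sv v (G b)))) = 0 := by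
      intro a b hab
      refine Finset.sum_eq_zero fun v _ => ?_
      rcases hab with hh | hh
      · rw [hF0 a hh, Aux.poisson_zero_left, Aux.oplus_zero]
      · rw [hG0 b hh, Aux.Sv_zero_poly, Aux.poisson_zero_right, Aux.oplus_zero]
    calc oplus N (∑ m ∈ Finset.range (Mf + Mg), comp m)
        = ∑ m ∈ Finset.range (Mf + Mg), ∑ m' ∈ Finset.range (m + 1),
            ∑ v : Fin N, oplus N (poisson N (F m') (Aux.Sv v (G (m - m')))) := by
          rw [Aux.oplus_sum]
          refine Finset.sum_congr rfl fun m _ => ?_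
          rw [hcomp]
          dsimp only
          rw [Aux.oplus_sum]
          refine Finset.sum_congr rfl fun m' _ => ?_
          rw [Aux.oplus_sum]
          refine Finset.sum_congr rfl fun v _ => ?_
          rw [hterm]
          dsimp only
          rw [Aux.oplus_Sv]
      _ = ∑ a ∈ Finset.range Mf, ∑ b ∈ Finset.range Mg,
            ∑ v : Fin N, oplus N (poisson N (F a) (Aux.Sv v (G b))) :=
          Aux.double_sum_tri Mf Mg
            (fun a b => ∑ v : Fin N, oplus N (poisson N (F a) (Aux.Sv v (G b)))) hvanish
      _ = poisson N (oplus N f) (oplus N g) := by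
          rw [hFsum, hGsum]
          rw [Aux.oplus_sum, Aux.oplus_sum, Aux.poisson_sum_left]
          refine Finset.sum_congr rfl fun a _ => ?_
          rw [Aux.poisson_sum_right]
          refine Finset.sum_congr rfl fun b _ => ?_
          rw [Aux.poisson_oplus_oplus]
  · -- vanishing for large m
    intro m hm
    rw [hcomp]
    dsimp only
    refine Finset.sum_eq_zero fun m' hm' => Finset.sum_eq_zero fun v _ => ?_
    rw [Finset.mem_range] at hm'
    rw [hterm]
    dsimp only
    rcases (by omega : Mf ≤ m' ∨ Mg ≤ m - m') with hh | hh
    · rw [hF0 m' hh, Aux.poisson_zero_left, Aux.Sv_zero_poly]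
    · rw [hG0 _ hh, Aux.Sv_zero_poly, Aux.poisson_zero_right, Aux.Sv_zero_poly]
  · -- support
    intro m
    refine Aux.suppIn_sum m _ _ fun m' hm' => Aux.suppIn_sum m _ _ fun v _ => ?_
    rw [Finset.mem_range] at hm'
    have he : m' + (m - m') = m := by omega
    have := hK m' (m - m') v
    rw [he] at this
    exact this
  · -- norm bound
    intro m
    have hstep1 : pnorm 1 (comp m) ≤ ∑ m' ∈ Finset.range (m + 1),
        ((r' : ℝ) * r'') * (pnorm 1 (F m') * pnorm 1 (G (m - m'))) := by
      rw [hcomp]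
      dsimp only
      refine le_trans (Aux.pnorm_one_sum_le _ _) (Finset.sum_le_sum fun m' _ => ?_)
      have hren : ∀ v : Fin N, pnorm 1 (term m' (m - m') v)
          = pnorm 1 (poisson N (F m') (Aux.Sv v (G (m - m')))) := by
        intro v
        rw [hterm]
        dsimp only
        rw [Aux.pnorm_one_Sv]
      refine le_trans (Aux.pnorm_one_sum_le _ _) ?_
      rw [Finset.sum_congr rfl fun v _ => hren v]
      exact Aux.sum_Sv_poisson_pnorm_le _ _ _ _ (hFhom m') (hGhom (m - m'))
    have hstep2 : ∑ m' ∈ Finset.range (m + 1),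
        ((r' : ℝ) * r'') * (pnorm 1 (F m') * pnorm 1 (G (m - m'))) ≤
        ∑ m' ∈ Finset.range (m + 1),
          ((r' : ℝ) * r'' * Cf * Cg) *
            (Real.exp (-σ' * m') * Real.exp (-σ'' * ((m - m' : ℕ) : ℝ))) := by
      refine Finset.sum_le_sum fun m' _ => ?_
      have h1 : pnorm 1 (F m') * pnorm 1 (G (m - m')) ≤
          (Cf * Real.exp (-σ' * m')) * (Cg * Real.exp (-σ'' * ((m - m' : ℕ) : ℝ))) :=
        mul_le_mul (hFnorm m') (hGnorm (m - m')) (Aux.pnorm_one_nonneg _)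
          (by positivity)
      calc ((r' : ℝ) * r'') * (pnorm 1 (F m') * pnorm 1 (G (m - m')))
          ≤ ((r' : ℝ) * r'') *
            ((Cf * Real.exp (-σ' * m')) * (Cg * Real.exp (-σ'' * ((m - m' : ℕ) : ℝ)))) :=
            mul_le_mul_of_nonneg_left h1 (by positivity)
        _ = ((r' : ℝ) * r'' * Cf * Cg) *
            (Real.exp (-σ' * m') * Real.exp (-σ'' * ((m - m' : ℕ) : ℝ))) := by ring
    refine le_trans hstep1 (le_trans hstep2 ?_)
    exact Aux.final_bound σ σ' σ'' hσ hσσ' hσσ'' _ (by positivity) m
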